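/- Let x_1,…,x_n ∈ ℝ^d with labels y_i ∈ {−1,+1}, let ω_i > 0, Δ_i > 0, ι_i ∈ ℝ, and let L(w) = Σ_{i=1}^n ω_i log(1 + e^{ι_i} e^{−Δ_i y_i ⟨x_i, w⟩}). Suppose ŵ ≠ 0 satisfies y_i⟨x_i, ŵ⟩ ≥ 1/Δ_i for all i ∈ [n], and fix ε > 0. Then there exists R₀ > 0 such that for every R ≥ R₀ the following holds: for every w ∈ ℝ^d for which there exists an index j ∈ [n] with Δ_j y_j ⟨x_j, w⟩ ≤ (1 − ε)·R/‖ŵ‖₂, one has L((R/‖ŵ‖₂)·ŵ) < L(w). -/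

import Mathlib

set_option maxHeartbeats 1000000


open scoped RealInnerProductSpace

lemma half_le_log' (t : ℝ) (h0 : 0 ≤ t) (h1 : t ≤ 1) : t / 2 ≤ Real.log (1 + t) := by
  have hpos : (0:ℝ) < 1 + t := by linarith
  have h := Real.log_le_sub_one_of_pos (x := (1 + t)⁻¹) (by positivity)
  rw [Real.log_inv] at h
  have hinv : (1 + t)⁻¹ - 1 = -t / (1 + t) := by field_simp; ring
  rw [hinv] at h
  have h2 : t / (1 + t) ≤ Real.log (1 + t) := by
    have := neg_le_neg h
    rw [neg_neg, neg_div, neg_neg] at this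
    exact this
  have h3 : t / 2 ≤ t / (1 + t) := by
    rw [div_le_div_iff₀ (by norm_num) hpos]
    nlinarith
  linarith

theorem stmt10 {n d : ℕ}
    (x : Fin n → EuclideanSpace ℝ (Fin d)) (y : Fin n → ℝ)
    (hy : ∀ i, y i = 1 ∨ y i = -1)
    (ω Δ ι : Fin n → ℝ) (hω : ∀ i, 0 < ω i) (hΔ : ∀ i, 0 < Δ i)
    (L : EuclideanSpace ℝ (Fin d) → ℝ)
    (hL : ∀ w, L w = ∑ i, ω i *
      Real.log (1 + Real.exp (ι i) * Real.exp (-(Δ i) * (y i * ⟪x i, w⟫))))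
    (ws : EuclideanSpace ℝ (Fin d)) (hws : ws ≠ 0)
    (hfeas : ∀ i, 1 / Δ i ≤ y i * ⟪x i, ws⟫)
    (ε : ℝ) (hε : 0 < ε) :
    ∃ R₀ > (0:ℝ), ∀ R ≥ R₀, ∀ w : EuclideanSpace ℝ (Fin d),
      (∃ j, Δ j * (y j * ⟪x j, w⟫) ≤ (1 - ε) * (R / ‖ws‖)) →
      L ((R / ‖ws‖) • ws) < L w := by
  have hN : (0:ℝ) < ‖ws‖ := norm_pos_iff.mpr hws
  rcases Nat.eq_zero_or_pos n with hn | hn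
  · refine ⟨1, one_pos, fun R _ w hw => ?_⟩
    obtain ⟨j, -⟩ := hw
    exact absurd j.isLt (by omega)
  -- n > 0
  have hne : (Finset.univ : Finset (Fin n)).Nonempty := by
    simpa [Finset.univ_nonempty_iff] using Fin.pos_iff_nonempty.mp hn
  set ε' : ℝ := min ε (1/2) with hε'def
  have hε'0 : 0 < ε' := lt_min hε (by norm_num)
  have hε'le : ε' ≤ ε := min_le_left _ _
  have hε'1 : ε' < 1 := lt_of_le_of_lt (min_le_right _ _) (by norm_num)
  set A : ℝ := ∑ i, ω i * Real.exp (ι i) with hAdef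
  have hA : 0 < A := Finset.sum_pos (fun i _ => mul_pos (hω i) (Real.exp_pos _)) hne
  set Ω : ℝ := Finset.univ.inf' hne ω with hΩdef
  set B : ℝ := Finset.univ.inf' hne (fun i => Real.exp (ι i)) with hBdef
  have hΩ : 0 < Ω := by
    obtain ⟨i, -, hi⟩ := Finset.exists_mem_eq_inf' hne ω
    rw [hΩdef, hi]; exact hω i
  have hB : 0 < B := by
    obtain ⟨i, -, hi⟩ := Finset.exists_mem_eq_inf' hne (fun i => Real.exp (ι i))
    rw [hBdef, hi]; positivity
  set K : ℝ := Ω * B / 2 with hKdef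
  have hK : 0 < K := by positivity
  -- eventually, the two key inequalities hold
  have t1 : Filter.Tendsto (fun c : ℝ => (A / K) * Real.exp (-ε' * c))
      Filter.atTop (nhds 0) := by
    rw [show (0:ℝ) = (A / K) * 0 by ring]
    refine Filter.Tendsto.const_mul _ (Real.tendsto_exp_comp_nhds_zero.mpr ?_)
    have hmul : Filter.Tendsto (fun c : ℝ => ε' * c) Filter.atTop Filter.atTop :=
      Filter.tendsto_id.const_mul_atTop hε'0
    exact Filter.Tendsto.congr (fun c => by simp only [Function.comp_apply]; ring)
      (Filter.tendsto_neg_atTop_atBot.comp hmul)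
  have t2 : Filter.Tendsto (fun c : ℝ => B * Real.exp (-(1 - ε') * c))
      Filter.atTop (nhds 0) := by
    rw [show (0:ℝ) = B * 0 by ring]
    refine Filter.Tendsto.const_mul _ (Real.tendsto_exp_comp_nhds_zero.mpr ?_)
    have h1 : (0:ℝ) < 1 - ε' := by linarith
    have hmul : Filter.Tendsto (fun c : ℝ => (1 - ε') * c) Filter.atTop Filter.atTop :=
      Filter.tendsto_id.const_mul_atTop h1
    exact Filter.Tendsto.congr (fun c => by simp only [Function.comp_apply]; ring)
      (Filter.tendsto_neg_atTop_atBot.comp hmul)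
  have hev : ∀ᶠ c : ℝ in Filter.atTop,
      (A / K) * Real.exp (-ε' * c) < 1 ∧ B * Real.exp (-(1 - ε') * c) ≤ 1 := by
    filter_upwards [t1.eventually_lt_const one_pos, t2.eventually_le_const one_pos]
      with c h1 h2
    exact ⟨h1, h2⟩
  obtain ⟨c₀, hc₀⟩ := Filter.eventually_atTop.mp hev
  refine ⟨max 1 ((max c₀ 1) * ‖ws‖), lt_max_of_lt_left one_pos, fun R hR w hw => ?_⟩
  obtain ⟨j, hj⟩ := hw
  set c : ℝ := R / ‖ws‖ with hcdef
  have hRpos : (0:ℝ) < R := lt_of_lt_of_le one_pos (le_trans (le_max_left _ _) hR)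
  have hc0 : 0 < c := by positivity
  have hcge : c₀ ≤ c := by
    have h : (max c₀ 1) * ‖ws‖ ≤ R := le_trans (le_max_right _ _) hR
    have h' : max c₀ 1 ≤ c := by
      rw [hcdef, le_div_iff₀ hN]; exact h
    exact le_trans (le_max_left _ _) h'
  obtain ⟨hkey1, hkey2⟩ := hc₀ c hcge
  -- margin of w at j
  set pj : ℝ := y j * ⟪x j, w⟫ with hpjdef
  have hmarg : Δ j * pj ≤ (1 - ε') * c := by
    have h2 : (1 - ε) * c ≤ (1 - ε') * c :=
      mul_le_mul_of_nonneg_right (by linarith) hc0.le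
    exact le_trans hj h2
  -- Upper bound on L (c • ws)
  have hscal : ∀ i : Fin n, c ≤ Δ i * (y i * ⟪x i, (c : ℝ) • ws⟫) := by
    intro i
    have h1 : 1 ≤ Δ i * (y i * ⟪x i, ws⟫) := by
      have h := hfeas i
      rw [div_le_iff₀ (hΔ i)] at h
      set q : ℝ := y i * ⟪x i, ws⟫
      nlinarith
    rw [real_inner_smul_right]
    set q : ℝ := ⟪x i, ws⟫
    have h2 := mul_le_mul_of_nonneg_left h1 hc0.le
    nlinarith
  have hupper : L ((c : ℝ) • ws) ≤ A * Real.exp (-c) := by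
    rw [hL, hAdef, Finset.sum_mul]
    refine Finset.sum_le_sum fun i _ => ?_
    have hsi := hscal i
    set r : ℝ := y i * ⟪x i, (c : ℝ) • ws⟫ with hrdef
    have hle : Real.exp (-(Δ i) * r) ≤ Real.exp (-c) := by
      apply Real.exp_le_exp.mpr
      nlinarith [hsi]
    have hlog : Real.log (1 + Real.exp (ι i) * Real.exp (-(Δ i) * r))
        ≤ Real.exp (ι i) * Real.exp (-c) := by
      calc Real.log (1 + Real.exp (ι i) * Real.exp (-(Δ i) * r))
          ≤ (1 + Real.exp (ι i) * Real.exp (-(Δ i) * r)) - 1 :=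
            Real.log_le_sub_one_of_pos (by positivity)
        _ = Real.exp (ι i) * Real.exp (-(Δ i) * r) := by ring
        _ ≤ Real.exp (ι i) * Real.exp (-c) :=
            mul_le_mul_of_nonneg_left hle (Real.exp_nonneg _)
    calc ω i * Real.log (1 + Real.exp (ι i) * Real.exp (-(Δ i) * r))
        ≤ ω i * (Real.exp (ι i) * Real.exp (-c)) :=
          mul_le_mul_of_nonneg_left hlog (le_of_lt (hω i))
      _ = ω i * Real.exp (ι i) * Real.exp (-c) := by ring
  -- Lower bound on L w
  have hΩj : Ω ≤ ω j := Finset.inf'_le _ (Finset.mem_univ j)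
  have hBj : B ≤ Real.exp (ι j) := Finset.inf'_le _ (Finset.mem_univ j)
  have hlower : K * Real.exp (-(1 - ε') * c) ≤ L w := by
    rw [hL]
    have hterm : K * Real.exp (-(1 - ε') * c) ≤
        ω j * Real.log (1 + Real.exp (ι j) * Real.exp (-(Δ j) * pj)) := by
      have hle : Real.exp (-(1 - ε') * c) ≤ Real.exp (-(Δ j) * pj) := by
        apply Real.exp_le_exp.mpr
        nlinarith [hmarg]
      have hBle : B * Real.exp (-(1 - ε') * c) ≤
          Real.exp (ι j) * Real.exp (-(Δ j) * pj) :=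
        mul_le_mul hBj hle (Real.exp_nonneg _) (Real.exp_nonneg _)
      have hBnn : 0 ≤ B * Real.exp (-(1 - ε') * c) := by positivity
      have hhalf : B * Real.exp (-(1 - ε') * c) / 2 ≤
          Real.log (1 + B * Real.exp (-(1 - ε') * c)) :=
        half_le_log' _ hBnn hkey2
      have hmono : Real.log (1 + B * Real.exp (-(1 - ε') * c)) ≤
          Real.log (1 + Real.exp (ι j) * Real.exp (-(Δ j) * pj)) :=
        Real.log_le_log (by positivity) (by linarith)
      calc K * Real.exp (-(1 - ε') * c) = Ω * (B * Real.exp (-(1 - ε') * c) / 2) := by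
            rw [hKdef]; ring
        _ ≤ Ω * Real.log (1 + B * Real.exp (-(1 - ε') * c)) :=
            mul_le_mul_of_nonneg_left hhalf (le_of_lt hΩ)
        _ ≤ ω j * Real.log (1 + B * Real.exp (-(1 - ε') * c)) := by
            apply mul_le_mul_of_nonneg_right hΩj
            apply Real.log_nonneg; linarith
        _ ≤ ω j * Real.log (1 + Real.exp (ι j) * Real.exp (-(Δ j) * pj)) :=
            mul_le_mul_of_nonneg_left hmono (le_of_lt (hω j))
    calc K * Real.exp (-(1 - ε') * c) ≤
        ω j * Real.log (1 + Real.exp (ι j) * Real.exp (-(Δ j) * pj)) := hterm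
      _ ≤ ∑ i, ω i * Real.log (1 + Real.exp (ι i) * Real.exp (-(Δ i) * (y i * ⟪x i, w⟫))) := by
          apply Finset.single_le_sum (f := fun i =>
            ω i * Real.log (1 + Real.exp (ι i) * Real.exp (-(Δ i) * (y i * ⟪x i, w⟫))))
            (fun i _ => ?_) (Finset.mem_univ j)
          apply mul_nonneg (le_of_lt (hω i))
          apply Real.log_nonneg
          have := mul_nonneg (Real.exp_nonneg (ι i))
            (Real.exp_nonneg (-(Δ i) * (y i * ⟪x i, w⟫)))
          linarith
  -- middle strict inequality
  have hmid : A * Real.exp (-c) < K * Real.exp (-(1 - ε') * c) := by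
    have hexp : Real.exp (-c) = Real.exp (-ε' * c) * Real.exp (-(1 - ε') * c) := by
      rw [← Real.exp_add]; ring_nf
    rw [hexp]
    have h1 : A * Real.exp (-ε' * c) < K := by
      have h := hkey1
      rw [div_mul_eq_mul_div, div_lt_one hK] at h
      exact h
    calc A * (Real.exp (-ε' * c) * Real.exp (-(1 - ε') * c))
        = (A * Real.exp (-ε' * c)) * Real.exp (-(1 - ε') * c) := by ring
      _ < K * Real.exp (-(1 - ε') * c) :=
          mul_lt_mul_of_pos_right h1 (Real.exp_pos _)
  calc L ((R / ‖ws‖) • ws) ≤ A * Real.exp (-c) := hupper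
    _ < K * Real.exp (-(1 - ε') * c) := hmid
    _ ≤ L w := hlower
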